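/- arXiv:0811.4341 — 11 statements merged into one kernel-verified Lean document; each statement's English description precedes it below -/
import Mathlib

section
/- Let B be an SSD space and A ⊆ B a maximally q-positive set. Then E^A satisfies the transportation formula: for all ε₁, ε₂ ≥ 0, b¹ ∈ E^A(ε₁), b² ∈ E^A(ε₂) and α₁, α₂ ≥ 0 with α₁ + α₂ = 1, one has ε := α₁ε₁ + α₂ε₂ + α₁α₂ q(b¹−b²) ≥ 0 and α₁b¹ + α₂b² ∈ E^A(ε). -/
def QPositive {B : Type*} [AddCommGroup B] (q : B → ℝ) (A : Set B) : Prop :=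
  A.Nonempty ∧ ∀ b ∈ A, ∀ c ∈ A, 0 ≤ q (b - c)

def MaxQPositive {B : Type*} [AddCommGroup B] (q : B → ℝ) (A : Set B) : Prop :=
  QPositive q A ∧ ∀ A' : Set B, QPositive q A' → A ⊆ A' → A' = A

def EnlA {B : Type*} [AddCommGroup B] (q : B → ℝ) (A : Set B) (ε : ℝ) : Set B :=
  {b : B | ∀ c ∈ A, -ε ≤ q (b - c)}

theorem EnlA_transportation_formula
    (B : Type*) [AddCommGroup B] [Module ℝ B] [Nontrivial B]
    (brk : B →ₗ[ℝ] B →ₗ[ℝ] ℝ) (hsym : ∀ b c : B, brk b c = brk c b)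
    (q : B → ℝ) (hq : ∀ b : B, q b = brk b b / 2)
    (A : Set B) (hA : MaxQPositive q A)
    (ε₁ ε₂ : ℝ) (hε₁ : 0 ≤ ε₁) (hε₂ : 0 ≤ ε₂)
    (b₁ b₂ : B) (hb₁ : b₁ ∈ EnlA q A ε₁) (hb₂ : b₂ ∈ EnlA q A ε₂)
    (α₁ α₂ : ℝ) (hα₁ : 0 ≤ α₁) (hα₂ : 0 ≤ α₂) (hα : α₁ + α₂ = 1) :
    0 ≤ α₁ * ε₁ + α₂ * ε₂ + α₁ * α₂ * q (b₁ - b₂) ∧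
      α₁ • b₁ + α₂ • b₂ ∈ EnlA q A (α₁ * ε₁ + α₂ * ε₂ + α₁ * α₂ * q (b₁ - b₂)) := by
  set x := α₁ • b₁ + α₂ • b₂ with hx
  set ε := α₁ * ε₁ + α₂ * ε₂ + α₁ * α₂ * q (b₁ - b₂) with hε
  have key : ∀ c : B, q (x - c) =
      α₁ * q (b₁ - c) + α₂ * q (b₂ - c) - α₁ * α₂ * q (b₁ - b₂) := by
    intro c
    simp only [hq, hx, map_sub, map_add, map_smul, LinearMap.sub_apply,
      LinearMap.add_apply, LinearMap.smul_apply, smul_eq_mul]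
    have h1 := hsym b₁ b₂
    have h2 := hsym b₁ c
    have h3 := hsym b₂ c
    linear_combination ((α₁ * brk b₁ b₁ + α₂ * brk b₂ b₂ - brk c c) / 2) * hα
  have hmem : x ∈ EnlA q A ε := by
    intro c hc
    have h1 := hb₁ c hc
    have h2 := hb₂ c hc
    rw [key c]
    nlinarith [mul_le_mul_of_nonneg_left h1 hα₁, mul_le_mul_of_nonneg_left h2 hα₂]
  refine ⟨?_, hmem⟩
  by_contra hneg
  push_neg at hneg
  -- ε < 0; then A ∪ {x} is q-positive, so x ∈ A by maximality, contradiction.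
  have hq0 : q 0 = 0 := by simp [hq]
  have hpos : QPositive q (A ∪ {x}) := by
    constructor
    · exact ⟨x, Or.inr rfl⟩
    · rintro b (hb | rfl) c (hc | rfl)
      · exact hA.1.2 b hb c hc
      · -- b ∈ A, c = x
        have : -ε ≤ q (x - b) := hmem b hb
        have hxb : q (b - x) = q (x - b) := by
          rw [show b - x = -(x - b) by abel]
          simp only [hq, map_neg, LinearMap.neg_apply, neg_neg]
        rw [hxb]; linarith
      · have : -ε ≤ q (x - c) := hmem c hc
        linarith
      · simp [hq0]
  have hsub : A ⊆ A ∪ {x} := Set.subset_union_left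
  have heq := hA.2 _ hpos hsub
  have hxA : x ∈ A := heq ▸ (Or.inr rfl : x ∈ A ∪ {x})
  have := hmem x hxA
  simp [hq0] at this
  linarith
end

section
/- Let B be an SSD space, A ⊆ B maximally q-positive, and let ε₁, ε₂ ≥ 0, b¹ ∈ E^A(ε₁), b² ∈ E^A(ε₂), α₁, α₂ ≥ 0 with α₁ + α₂ = 1, and c ∈ A. Then q(α₁b¹ + α₂b² − c) ≥ −α₁ε₁ − α₂ε₂ − α₁α₂ q(b¹−b²). -/
theorem EnlA_convex_combination_estimate
    (B : Type*) [AddCommGroup B] [Module ℝ B] [Nontrivial B]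
    (brk : B →ₗ[ℝ] B →ₗ[ℝ] ℝ) (hsym : ∀ b c : B, brk b c = brk c b)
    (q : B → ℝ) (hq : ∀ b : B, q b = brk b b / 2)
    (A : Set B) (hA : MaxQPositive q A)
    (ε₁ ε₂ : ℝ) (hε₁ : 0 ≤ ε₁) (hε₂ : 0 ≤ ε₂)
    (b₁ b₂ : B) (hb₁ : b₁ ∈ EnlA q A ε₁) (hb₂ : b₂ ∈ EnlA q A ε₂)
    (α₁ α₂ : ℝ) (hα₁ : 0 ≤ α₁) (hα₂ : 0 ≤ α₂) (hα : α₁ + α₂ = 1)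
    (c : B) (hc : c ∈ A) :
    -(α₁ * ε₁) - α₂ * ε₂ - α₁ * α₂ * q (b₁ - b₂) ≤ q (α₁ • b₁ + α₂ • b₂ - c) := by
  obtain rfl : α₂ = 1 - α₁ := by linarith
  have h1 := hb₁ c hc
  have h2 := hb₂ c hc
  have hcomb : α₁ • b₁ + (1 - α₁) • b₂ - c = α₁ • (b₁ - c) + (1 - α₁) • (b₂ - c) := by
    module
  have hdiff : b₁ - b₂ = (b₁ - c) - (b₂ - c) := by abel
  set x := b₁ - c
  set y := b₂ - c
  rw [hcomb, hdiff]
  have hxy := hsym x y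
  simp only [hq, map_add, map_sub, map_smul, LinearMap.add_apply, LinearMap.sub_apply,
    LinearMap.smul_apply, smul_eq_mul] at *
  nlinarith [mul_nonneg hα₁ (by linarith : (0:ℝ) ≤ brk x x / 2 + ε₁),
    mul_nonneg hα₂ (by linarith : (0:ℝ) ≤ brk y y / 2 + ε₂)]
end

section
/- Let B be an SSD space and E : ℝ₊ ⇉ B a multifunction. Define Ψ : ℝ × B → ℝ × B by Ψ(ε,b) = (ε + q(b), b). Then E satisfies the transportation formula if and only if the image Ψ(G(E)) of the graph of E (with graph G(E) = {(ε,b) : b ∈ E(ε)}) is a convex subset of ℝ × B. -/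
/-- The transportation formula for a multifunction `E : ℝ₊ ⇉ B`. -/
def TransportationFormula {B : Type*} [AddCommGroup B] [Module ℝ B]
    (q : B → ℝ) (E : ℝ → Set B) : Prop :=
  ∀ ε₁ ε₂ : ℝ, 0 ≤ ε₁ → 0 ≤ ε₂ → ∀ b₁ ∈ E ε₁, ∀ b₂ ∈ E ε₂,
    ∀ α₁ α₂ : ℝ, 0 ≤ α₁ → 0 ≤ α₂ → α₁ + α₂ = 1 →
      0 ≤ α₁ * ε₁ + α₂ * ε₂ + α₁ * α₂ * q (b₁ - b₂) ∧
        α₁ • b₁ + α₂ • b₂ ∈ E (α₁ * ε₁ + α₂ * ε₂ + α₁ * α₂ * q (b₁ - b₂))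

/-- The graph of a multifunction `E : ℝ₊ ⇉ B`. -/
def MGraph {B : Type*} (E : ℝ → Set B) : Set (ℝ × B) :=
  {p : ℝ × B | 0 ≤ p.1 ∧ p.2 ∈ E p.1}

lemma key_q {B : Type*} [AddCommGroup B] [Module ℝ B]
    (brk : B →ₗ[ℝ] B →ₗ[ℝ] ℝ) (hsym : ∀ b c : B, brk b c = brk c b)
    (q : B → ℝ) (hq : ∀ b : B, q b = brk b b / 2)
    (b₁ b₂ : B) (α₁ α₂ : ℝ) (h : α₁ + α₂ = 1) :
    α₁ * α₂ * q (b₁ - b₂) + q (α₁ • b₁ + α₂ • b₂) = α₁ * q b₁ + α₂ * q b₂ := by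
  have hα₂ : α₂ = 1 - α₁ := by linarith
  subst hα₂
  simp only [hq, map_sub, map_add, map_smul, LinearMap.sub_apply, LinearMap.add_apply,
    LinearMap.smul_apply, smul_eq_mul]
  rw [hsym b₂ b₁]
  ring

theorem transportation_iff_convex_image
    (B : Type*) [AddCommGroup B] [Module ℝ B] [Nontrivial B]
    (brk : B →ₗ[ℝ] B →ₗ[ℝ] ℝ) (hsym : ∀ b c : B, brk b c = brk c b)
    (q : B → ℝ) (hq : ∀ b : B, q b = brk b b / 2)
    (E : ℝ → Set B) :
    TransportationFormula q E ↔
      Convex ℝ ((fun p : ℝ × B => (p.1 + q p.2, p.2)) '' MGraph E) := by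
  constructor
  · intro hT
    rintro _ ⟨⟨ε₁, b₁⟩, ⟨hε₁, hb₁⟩, rfl⟩ _ ⟨⟨ε₂, b₂⟩, ⟨hε₂, hb₂⟩, rfl⟩ α₁ α₂ h1 h2 h12
    obtain ⟨hnn, hmem⟩ := hT ε₁ ε₂ hε₁ hε₂ b₁ hb₁ b₂ hb₂ α₁ α₂ h1 h2 h12
    refine ⟨(α₁ * ε₁ + α₂ * ε₂ + α₁ * α₂ * q (b₁ - b₂), α₁ • b₁ + α₂ • b₂),
      ⟨hnn, hmem⟩, ?_⟩
    have hk := key_q brk hsym q hq b₁ b₂ α₁ α₂ h12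
    simp only [Prod.smul_mk, Prod.mk_add_mk, Prod.mk.injEq, smul_eq_mul]
    constructor
    · linarith [hk]
    · trivial
  · intro hC ε₁ ε₂ hε₁ hε₂ b₁ hb₁ b₂ hb₂ α₁ α₂ h1 h2 h12
    have m₁ : ((ε₁ + q b₁, b₁) : ℝ × B) ∈
        (fun p : ℝ × B => (p.1 + q p.2, p.2)) '' MGraph E := ⟨(ε₁, b₁), ⟨hε₁, hb₁⟩, rfl⟩
    have m₂ : ((ε₂ + q b₂, b₂) : ℝ × B) ∈
        (fun p : ℝ × B => (p.1 + q p.2, p.2)) '' MGraph E := ⟨(ε₂, b₂), ⟨hε₂, hb₂⟩, rfl⟩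
    obtain ⟨⟨ε', b'⟩, ⟨hε', hb'⟩, heq⟩ := hC m₁ m₂ h1 h2 h12
    simp only [Prod.smul_mk, Prod.mk_add_mk, Prod.mk.injEq, smul_eq_mul] at heq
    obtain ⟨heq1, heq2⟩ := heq
    have hk := key_q brk hsym q hq b₁ b₂ α₁ α₂ h12
    have hε'' : ε' = α₁ * ε₁ + α₂ * ε₂ + α₁ * α₂ * q (b₁ - b₂) := by
      have : ε' + q b' = α₁ * (ε₁ + q b₁) + α₂ * (ε₂ + q b₂) := heq1
      rw [heq2] at this
      linarith [hk]
    rw [hε''] at hε' hb'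
    rw [heq2] at hb'
    exact ⟨hε', hb'⟩
end

section
/- Let B be an SSD space and E : ℝ₊ ⇉ B. If E satisfies the transportation formula, then E satisfies the n-point transportation formula: for all n ≥ 1, εᵢ ≥ 0, bⁱ ∈ E(εᵢ), αᵢ ≥ 0 (i = 1,...,n) with Σαᵢ = 1, one has ε := Σᵢ αᵢεᵢ + Σᵢ αᵢ q(bⁱ − Σⱼ αⱼbʲ) ≥ 0 and Σᵢ αᵢbⁱ ∈ E(ε). -/
open scoped BigOperators

theorem transportation_implies_n_point_transportation
    (B : Type*) [AddCommGroup B] [Module ℝ B] [Nontrivial B]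
    (brk : B →ₗ[ℝ] B →ₗ[ℝ] ℝ) (hsym : ∀ b c : B, brk b c = brk c b)
    (q : B → ℝ) (hq : ∀ b : B, q b = brk b b / 2)
    (E : ℝ → Set B) (hE : TransportationFormula q E)
    (n : ℕ) (hn : 1 ≤ n) (ε : Fin n → ℝ) (hε : ∀ i, 0 ≤ ε i)
    (b : Fin n → B) (hb : ∀ i, b i ∈ E (ε i))
    (α : Fin n → ℝ) (hα : ∀ i, 0 ≤ α i) (hαs : ∑ i, α i = 1) :
    0 ≤ ∑ i, α i * ε i + ∑ i, α i * q (b i - ∑ j, α j • b j) ∧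
      (∑ i, α i • b i) ∈ E (∑ i, α i * ε i + ∑ i, α i * q (b i - ∑ j, α j • b j)) := by
  have qexp : ∀ x y : B, q (x - y) = q x - brk x y + q y := by
    intro x y
    simp only [hq, map_sub, LinearMap.sub_apply]
    rw [hsym y x]; ring
  have brk_sum : ∀ (m : ℕ) (γ : Fin m → ℝ) (c : Fin m → B) (y : B),
      brk (∑ i, γ i • c i) y = ∑ i, γ i * brk (c i) y := by
    intro m γ c y
    rw [map_sum, LinearMap.sum_apply]
    simp [smul_eq_mul]
  have variance : ∀ (m : ℕ) (γ : Fin m → ℝ) (c : Fin m → B), (∑ i, γ i = 1) →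
      ∑ i, γ i * q (c i - ∑ j, γ j • c j) =
        ∑ i, γ i * q (c i) - q (∑ j, γ j • c j) := by
    intro m γ c hs
    set M := ∑ j, γ j • c j with hM
    have h1 : ∑ i, γ i * q (c i - M) =
        ∑ i, (γ i * q (c i) - γ i * brk (c i) M + γ i * q M) := by
      refine Finset.sum_congr rfl fun i _ => ?_
      rw [qexp]; ring
    rw [h1, Finset.sum_add_distrib, Finset.sum_sub_distrib, ← Finset.sum_mul, hs, one_mul]
    have h2 : ∑ i, γ i * brk (c i) M = brk M M := by rw [hM, brk_sum]
    have h3 : brk M M = 2 * q M := by rw [hq]; ring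
    rw [h2, h3]; ring
  have key : ∀ m : ℕ, 1 ≤ m → ∀ (ε : Fin m → ℝ), (∀ i, 0 ≤ ε i) →
      ∀ (b : Fin m → B), (∀ i, b i ∈ E (ε i)) →
      ∀ (α : Fin m → ℝ), (∀ i, 0 ≤ α i) → (∑ i, α i = 1) →
      0 ≤ (∑ i, α i * ε i) + (∑ i, α i * q (b i)) - q (∑ i, α i • b i) ∧
        (∑ i, α i • b i) ∈
          E ((∑ i, α i * ε i) + (∑ i, α i * q (b i)) - q (∑ i, α i • b i)) := by
    intro m
    induction m with
    | zero => omega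
    | succ m ih =>
      intro _ ε hε b hb α hα hαs
      rcases Nat.eq_zero_or_pos m with hm | hm
      · subst hm
        have h1 : α 0 = 1 := by rw [← hαs, Fin.sum_univ_one]
        rw [Fin.sum_univ_one, Fin.sum_univ_one, Fin.sum_univ_one, h1, one_smul]
        have heq : 1 * ε 0 + 1 * q (b 0) - q (b 0) = ε 0 := by ring
        rw [heq]
        exact ⟨hε 0, hb 0⟩
      · set β := ∑ i : Fin m, α i.castSucc with hβ
        have hsum : β + α (Fin.last m) = 1 := by
          rw [hβ, ← Fin.sum_univ_castSucc]; exact hαs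
        have hβ0 : 0 ≤ β := Finset.sum_nonneg fun i _ => hα _
        have hαl : 0 ≤ α (Fin.last m) := hα _
        rcases eq_or_lt_of_le hβ0 with hβz | hβpos
        · -- β = 0 : all weights on last point
          have hz : ∀ i : Fin m, α i.castSucc = 0 := by
            intro i
            have := (Finset.sum_eq_zero_iff_of_nonneg
              (fun j _ => hα (Fin.castSucc j))).mp hβz.symm
            exact this i (Finset.mem_univ i)
          have hlast : α (Fin.last m) = 1 := by
            rw [← hsum, ← hβz]; ring
          have e1 : ∑ i, α i * ε i = ε (Fin.last m) := by
            rw [Fin.sum_univ_castSucc]; simp [hz, hlast]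
          have e2 : ∑ i, α i * q (b i) = q (b (Fin.last m)) := by
            rw [Fin.sum_univ_castSucc]; simp [hz, hlast]
          have e3 : ∑ i, α i • b i = b (Fin.last m) := by
            rw [Fin.sum_univ_castSucc]; simp [hz, hlast]
          rw [e1, e2, e3]
          have heq : ε (Fin.last m) + q (b (Fin.last m)) - q (b (Fin.last m))
              = ε (Fin.last m) := by ring
          rw [heq]
          exact ⟨hε _, hb _⟩
        · -- β > 0
          have hβne : β ≠ 0 := ne_of_gt hβpos
          have hcancel : ∀ x : ℝ, β * (x / β) = x := by
            intro x; field_simp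
          set α' : Fin m → ℝ := fun i => α i.castSucc / β with hα'def
          have hα' : ∀ i, 0 ≤ α' i := fun i => div_nonneg (hα _) hβ0
          have hαs' : ∑ i, α' i = 1 := by
            rw [hα'def]
            rw [← Finset.sum_div, ← hβ, div_self hβne]
          obtain ⟨he'0, hc⟩ := ih hm (fun i => ε i.castSucc) (fun i => hε _)
            (fun i => b i.castSucc) (fun i => hb _) α' hα' hαs'
          set c := ∑ i : Fin m, α' i • b i.castSucc with hcdef
          set e' := (∑ i, α' i * ε i.castSucc) + (∑ i, α' i * q (b i.castSucc)) - q c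
            with he'def
          obtain ⟨hpos, hmem⟩ := hE e' (ε (Fin.last m)) he'0 (hε _) c hc
            (b (Fin.last m)) (hb _) β (α (Fin.last m)) hβ0 hαl hsum
          -- the combined point equals the full barycenter
          have hA : β • c + α (Fin.last m) • b (Fin.last m) = ∑ i, α i • b i := by
            rw [Fin.sum_univ_castSucc, hcdef, Finset.smul_sum]
            congr 1
            refine Finset.sum_congr rfl fun i _ => ?_
            rw [smul_smul, hα'def, hcancel]
          -- the combined epsilon equals the target
          have hB : β * e' + α (Fin.last m) * ε (Fin.last m)
              + β * α (Fin.last m) * q (c - b (Fin.last m))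
              = (∑ i, α i * ε i) + (∑ i, α i * q (b i)) - q (∑ i, α i • b i) := by
            rw [← hA]
            have hb1 : β * (∑ i, α' i * ε i.castSucc) = ∑ i : Fin m, α i.castSucc * ε i.castSucc := by
              rw [Finset.mul_sum]
              refine Finset.sum_congr rfl fun i _ => ?_
              rw [hα'def, ← mul_assoc, hcancel]
            have hb2 : β * (∑ i, α' i * q (b i.castSucc))
                = ∑ i : Fin m, α i.castSucc * q (b i.castSucc) := by
              rw [Finset.mul_sum]
              refine Finset.sum_congr rfl fun i _ => ?_
              rw [hα'def, ← mul_assoc, hcancel]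
            rw [he'def, mul_sub, mul_add, hb1, hb2]
            rw [Fin.sum_univ_castSucc (f := fun i : Fin (m+1) => α i * ε i),
              Fin.sum_univ_castSucc (f := fun i : Fin (m+1) => α i * q (b i))]
            have hql : q (c - b (Fin.last m)) =
                q c - brk c (b (Fin.last m)) + q (b (Fin.last m)) := qexp _ _
            have hqm : q (β • c + α (Fin.last m) • b (Fin.last m))
                = β ^ 2 * q c + β * α (Fin.last m) * brk c (b (Fin.last m))
                  + α (Fin.last m) ^ 2 * q (b (Fin.last m)) := by
              simp only [hq, map_add, map_smul, LinearMap.add_apply, LinearMap.smul_apply,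
                smul_eq_mul]
              rw [hsym (b (Fin.last m)) c]
              ring
            rw [hql, hqm]
            linear_combination (q c * β + q (b (Fin.last m)) * α (Fin.last m)) * hsum
          rw [← hB, ← hA]
          exact ⟨hpos, hmem⟩
  have hkey := key n hn ε hε b hb α hα hαs
  rw [variance n α b hαs]
  constructor
  · linarith [hkey.1]
  · have : (∑ i, α i * ε i) + ((∑ i, α i * q (b i)) - q (∑ j, α j • b j))
        = (∑ i, α i * ε i) + (∑ i, α i * q (b i)) - q (∑ i, α i • b i) := by ring
    rw [this]
    exact hkey.2
end

section
/- Let B be an SSD space and A ⊆ B a maximally q-positive set. Then E^A is the biggest element of 𝓔(A) with respect to graph inclusion: for every E ∈ 𝓔(A), G(E) ⊆ G(E^A). -/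
/-- Membership of the multifunction `E` in the family `𝓔(A)`. -/
def MemEnlFamily {B : Type*} [AddCommGroup B] [Module ℝ B]
    (q : B → ℝ) (A : Set B) (E : ℝ → Set B) : Prop :=
  (∀ ε : ℝ, 0 ≤ ε → A ⊆ E ε) ∧
    (∀ ε₁ ε₂ : ℝ, 0 ≤ ε₁ → ε₁ ≤ ε₂ → E ε₁ ⊆ E ε₂) ∧
      TransportationFormula q E

theorem EnlA_biggest_in_family
    (B : Type*) [AddCommGroup B] [Module ℝ B] [Nontrivial B]
    (brk : B →ₗ[ℝ] B →ₗ[ℝ] ℝ) (hsym : ∀ b c : B, brk b c = brk c b)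
    (q : B → ℝ) (hq : ∀ b : B, q b = brk b b / 2)
    (A : Set B) (hA : MaxQPositive q A)
    (E : ℝ → Set B) (hE : MemEnlFamily q A E) :
    ∀ ε : ℝ, 0 ≤ ε → E ε ⊆ EnlA q A ε := by
  intro ε hε b hb c hc
  by_contra h
  push_neg at h
  set Q := q (b - c) with hQdef
  have hQneg : Q < 0 := lt_of_lt_of_le h (by linarith)
  have hc0 : c ∈ E 0 := hE.1 0 le_rfl hc
  -- choose weights
  set s : ℝ := (1 + ε / (-Q)) / 2 with hs
  have hεQ : ε / (-Q) < 1 := by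
    rw [div_lt_one (by linarith)]
    linarith
  have hεQ0 : 0 ≤ ε / (-Q) := div_nonneg hε (by linarith)
  have hs0 : 0 < s := by rw [hs]; linarith
  have hs1 : s < 1 := by rw [hs]; linarith
  set t : ℝ := 1 - s with ht
  have ht0 : 0 < t := by linarith
  have htrans := (hE.2.2 ε 0 hε le_rfl b hb c hc0 t s (le_of_lt ht0) (le_of_lt hs0)
    (by ring)).1
  rw [← hQdef] at htrans
  -- show t * ε + s * 0 + t * s * Q < 0
  have hsQ : ε + s * Q < 0 := by
    have : s * (-Q) = ((-Q) + ε) / 2 := by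
      have hQne : Q ≠ 0 := ne_of_lt hQneg
      rw [hs, div_neg]
      field_simp
      ring
    nlinarith
  nlinarith
end

section
/- Let B be an SSD space, A ⊆ B a maximally q-positive set and E ∈ 𝓔(A). Then E(0) = ⋂_{ε>0} E(ε) = A. -/
theorem enlargement_zero_eq_inter_eq
    (B : Type*) [AddCommGroup B] [Module ℝ B] [Nontrivial B]
    (brk : B →ₗ[ℝ] B →ₗ[ℝ] ℝ) (hsym : ∀ b c : B, brk b c = brk c b)
    (q : B → ℝ) (hq : ∀ b : B, q b = brk b b / 2)
    (A : Set B) (hA : MaxQPositive q A)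
    (E : ℝ → Set B) (hE : MemEnlFamily q A E) :
    E 0 = A ∧ (⋂ ε ∈ Set.Ioi (0 : ℝ), E ε) = A := by
  obtain ⟨hr1, hr2, hr3⟩ := hE
  obtain ⟨⟨hAne, hApos⟩, hAmax⟩ := hA
  have hqneg : ∀ x : B, q (-x) = q x := by
    intro x
    simp [hq, map_neg]
  have hq0 : q 0 = 0 := by simp [hq]
  -- key lemma: if q (b - a) ≥ 0 for all a ∈ A, then b ∈ A
  have key : ∀ b : B, (∀ a ∈ A, 0 ≤ q (b - a)) → b ∈ A := by
    intro b hb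
    have hpos : QPositive q (A ∪ {b}) := by
      refine ⟨⟨b, Or.inr rfl⟩, ?_⟩
      rintro x (hx | rfl) y (hy | rfl)
      · exact hApos x hx y hy
      · have := hb x hx
        rw [← hqneg, neg_sub] at this
        simpa using this
      · exact hb y hy
      · simp [hq0]
    have := hAmax _ hpos Set.subset_union_left
    rw [← this]
    exact Or.inr rfl
  have hA0 : A ⊆ E 0 := hr1 0 le_rfl
  constructor
  · apply Set.Subset.antisymm _ hA0
    intro b hb
    apply key
    intro a ha
    have := (hr3 0 0 le_rfl le_rfl b hb a (hA0 ha) (1/2) (1/2) (by norm_num)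
      (by norm_num) (by norm_num)).1
    nlinarith
  · apply Set.Subset.antisymm
    · intro b hb
      simp only [Set.mem_iInter, Set.mem_Ioi] at hb
      apply key
      intro a ha
      by_contra hneg
      push_neg at hneg
      set ε : ℝ := -q (b - a) / 8 with hε
      have hεpos : 0 < ε := by rw [hε]; linarith
      have := (hr3 ε 0 hεpos.le le_rfl b (hb ε hεpos) a (hA0 ha) (1/2) (1/2)
        (by norm_num) (by norm_num) (by norm_num)).1
      rw [hε] at this
      nlinarith
    · intro a ha
      simp only [Set.mem_iInter, Set.mem_Ioi]
      intro ε hε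
      exact hr1 ε hε.le ha
end

section
/- Let B be a Banach SSD space and E : ℝ₊ ⇉ B a multifunction that is closed (its graph is closed) and nondecreasing. Define λ_E(b) = inf{ε ≥ 0 : b ∈ E(ε)}. Then: (i) the graph of E⁻¹ equals the epigraph of λ_E; (ii) λ_E is lower semicontinuous; (iii) λ_E ≥ 0; (iv) E(ε) = {b ∈ B : λ_E(b) ≤ ε} for all ε ≥ 0. Moreover λ_E is the unique function B → (−∞,+∞] satisfying (iii) and (iv). -/
open scoped Classical

/-- `λ_E(b) = inf {ε ≥ 0 : b ∈ E(ε)}`, with values in `[0,+∞]` and `inf ∅ = +∞`. -/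
noncomputable def lamE {B : Type*} (E : ℝ → Set B) (b : B) : EReal :=
  sInf ((fun ε : ℝ => (ε : EReal)) '' {ε : ℝ | 0 ≤ ε ∧ b ∈ E ε})

lemma lamE_nonneg {B : Type*} (E : ℝ → Set B) (b : B) : 0 ≤ lamE E b := by
  refine le_sInf ?_
  rintro _ ⟨ε, ⟨hε, _⟩, rfl⟩
  show (0 : EReal) ≤ (ε : EReal)
  exact_mod_cast hε

lemma lamE_le_of_mem {B : Type*} {E : ℝ → Set B} {b : B} {ε : ℝ} (hε : 0 ≤ ε)
    (hb : b ∈ E ε) : lamE E b ≤ (ε : EReal) :=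
  sInf_le ⟨ε, ⟨hε, hb⟩, rfl⟩

lemma mem_of_lamE_le {B : Type*} [TopologicalSpace B] {E : ℝ → Set B}
    (hclosed : IsClosed {p : ℝ × B | 0 ≤ p.1 ∧ p.2 ∈ E p.1})
    (hmono : ∀ ε₁ ε₂ : ℝ, 0 ≤ ε₁ → ε₁ ≤ ε₂ → E ε₁ ⊆ E ε₂)
    {b : B} {ε : ℝ} (hε : 0 ≤ ε) (h : lamE E b ≤ (ε : EReal)) : b ∈ E ε := by
  have key : ∀ n : ℕ, b ∈ E (ε + 1 / (n + 1)) := by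
    intro n
    have hlt : lamE E b < ((ε + 1 / (n + 1) : ℝ) : EReal) := by
      refine lt_of_le_of_lt h ?_
      have hr : ε < ε + 1 / ((n : ℝ) + 1) := by
        have : (0 : ℝ) < 1 / ((n : ℝ) + 1) := by positivity
        linarith
      exact_mod_cast hr
    obtain ⟨x, hx, hxlt⟩ := sInf_lt_iff.mp hlt
    obtain ⟨δ, ⟨hδ0, hδb⟩, rfl⟩ := hx
    change (δ : EReal) < _ at hxlt
    have : δ ≤ ε + 1 / (n + 1) := le_of_lt (by exact_mod_cast hxlt)
    exact hmono δ _ hδ0 this hδb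
  have htend : Filter.Tendsto (fun n : ℕ => ((ε + 1 / (n + 1) : ℝ), b))
      Filter.atTop (nhds (ε, b)) := by
    refine Filter.Tendsto.prodMk_nhds ?_ tendsto_const_nhds
    have := tendsto_one_div_add_atTop_nhds_zero_nat (𝕜 := ℝ)
    have h2 := this.const_add ε
    simpa using h2
  have hmem : (ε, b) ∈ {p : ℝ × B | 0 ≤ p.1 ∧ p.2 ∈ E p.1} := by
    refine hclosed.mem_of_tendsto htend (Filter.Eventually.of_forall ?_)
    intro n
    exact ⟨by positivity, key n⟩
  exact hmem.2

theorem lamE_properties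
    (B : Type*) [NormedAddCommGroup B] [NormedSpace ℝ B] [CompleteSpace B] [Nontrivial B]
    (brk : B →ₗ[ℝ] B →ₗ[ℝ] ℝ) (hsym : ∀ b c : B, brk b c = brk c b)
    (q : B → ℝ) (hq : ∀ b : B, q b = brk b b / 2)
    (hpos : ∀ b : B, 0 ≤ (1 / 2) * ‖b‖ ^ 2 + q b)
    (ι : B →L[ℝ] (B →L[ℝ] ℝ)) (hι : ∀ b c : B, ι c b = brk b c)
    (E : ℝ → Set B)
    (hclosed : IsClosed {p : ℝ × B | 0 ≤ p.1 ∧ p.2 ∈ E p.1})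
    (hmono : ∀ ε₁ ε₂ : ℝ, 0 ≤ ε₁ → ε₁ ≤ ε₂ → E ε₁ ⊆ E ε₂) :
    {p : B × ℝ | 0 ≤ p.2 ∧ p.1 ∈ E p.2} = {p : B × ℝ | lamE E p.1 ≤ (p.2 : EReal)} ∧
    LowerSemicontinuous (lamE E) ∧
    (∀ b : B, 0 ≤ lamE E b) ∧
    (∀ ε : ℝ, 0 ≤ ε → E ε = {b : B | lamE E b ≤ (ε : EReal)}) ∧
    ∀ g : B → EReal, (∀ b : B, 0 ≤ g b) →
      (∀ ε : ℝ, 0 ≤ ε → E ε = {b : B | g b ≤ (ε : EReal)}) → g = lamE E := by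
  have hiff : ∀ (b : B) (ε : ℝ), 0 ≤ ε → (b ∈ E ε ↔ lamE E b ≤ (ε : EReal)) := by
    intro b ε hε
    exact ⟨lamE_le_of_mem hε, mem_of_lamE_le hclosed hmono hε⟩
  have hlev : ∀ ε : ℝ, 0 ≤ ε → E ε = {b : B | lamE E b ≤ (ε : EReal)} := by
    intro ε hε
    ext b
    exact hiff b ε hε
  have hEclosed : ∀ ε : ℝ, IsClosed (E ε ∩ Set.univ) → True := fun _ _ => trivial
  have hEcl : ∀ ε : ℝ, 0 ≤ ε → IsClosed (E ε) := by
    intro ε hε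
    have : E ε = (fun b : B => ((ε, b) : ℝ × B)) ⁻¹' {p : ℝ × B | 0 ≤ p.1 ∧ p.2 ∈ E p.1} := by
      ext b; simp [hε]
    rw [this]
    exact hclosed.preimage (Continuous.prodMk continuous_const continuous_id)
  refine ⟨?_, ?_, lamE_nonneg E, hlev, ?_⟩
  · ext ⟨b, ε⟩
    simp only [Set.mem_setOf_eq]
    constructor
    · rintro ⟨hε, hb⟩; exact (hiff b ε hε).mp hb
    · intro h
      have hε : (0 : EReal) ≤ (ε : EReal) := le_trans (lamE_nonneg E b) h
      have hε' : (0 : ℝ) ≤ ε := by exact_mod_cast hε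
      exact ⟨hε', (hiff b ε hε').mpr h⟩
  · -- lower semicontinuity via closed sublevel sets
    rw [lowerSemicontinuous_iff_isClosed_preimage]
    intro y
    induction y using EReal.rec with
    | bot =>
      have : lamE E ⁻¹' Set.Iic ⊥ = ∅ := by
        ext b
        simp only [Set.mem_preimage, Set.mem_Iic, Set.mem_empty_iff_false, iff_false, le_bot_iff]
        intro hb
        have := lamE_nonneg E b
        rw [hb] at this
        simp at this
      rw [this]; exact isClosed_empty
    | coe x =>
      by_cases hx : 0 ≤ x
      · have : lamE E ⁻¹' Set.Iic (x : EReal) = E x := by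
          rw [hlev x hx]; rfl
        rw [this]; exact hEcl x hx
      · have : lamE E ⁻¹' Set.Iic (x : EReal) = ∅ := by
          ext b
          simp only [Set.mem_preimage, Set.mem_Iic, Set.mem_empty_iff_false, iff_false]
          intro hb
          have h0 := le_trans (lamE_nonneg E b) hb
          have : (0 : ℝ) ≤ x := by exact_mod_cast h0
          exact hx this
        rw [this]; exact isClosed_empty
    | top =>
      have : lamE E ⁻¹' Set.Iic ⊤ = Set.univ := by
        ext b; simp
      rw [this]; exact isClosed_univ
  · intro g hg0 hglev
    funext b
    by_contra hne
    rcases lt_or_gt_of_ne hne with hlt | hlt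
    · obtain ⟨x, hx1, hx2⟩ := EReal.lt_iff_exists_real_btwn.mp hlt
      have hx0 : (0 : ℝ) ≤ x := by
        have := le_trans (hg0 b) (le_of_lt hx1)
        exact_mod_cast this
      have hbE : b ∈ E x := by
        rw [hglev x hx0]; exact le_of_lt hx1
      have := lamE_le_of_mem hx0 hbE
      exact absurd (lt_of_le_of_lt this hx2) (lt_irrefl _)
    · obtain ⟨x, hx1, hx2⟩ := EReal.lt_iff_exists_real_btwn.mp hlt
      have hx0 : (0 : ℝ) ≤ x := by
        have := le_trans (lamE_nonneg E b) (le_of_lt hx1)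
        exact_mod_cast this
      have hbE : b ∈ E x := mem_of_lamE_le hclosed hmono hx0 (le_of_lt hx1)
      have : g b ≤ (x : EReal) := by rw [hglev x hx0] at hbE; exact hbE
      exact absurd (lt_of_le_of_lt this hx2) (lt_irrefl _)
end

section
/- Let B be a Banach SSD space and A ⊆ B maximally q-positive. If h ∈ 𝓗(A), then A_h ∈ 𝓔_c(A) and Λ_{A_h} = h, where A_h(ε) := {b ∈ B : h(b) ≤ ε + q(b)}. -/
/-- Membership in the family `𝓔_c(A)` of closed enlargements. -/
def MemEnlFamilyClosed {B : Type*} [AddCommGroup B] [Module ℝ B] [TopologicalSpace B]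
    (q : B → ℝ) (A : Set B) (E : ℝ → Set B) : Prop :=
  (∀ ε : ℝ, 0 ≤ ε → A ⊆ E ε) ∧
    (∀ ε₁ ε₂ : ℝ, 0 ≤ ε₁ → ε₁ ≤ ε₂ → E ε₁ ⊆ E ε₂) ∧
      TransportationFormula q E ∧
        IsClosed {p : ℝ × B | 0 ≤ p.1 ∧ p.2 ∈ E p.1}

/-- Convexity for extended-real-valued functions. -/
def ConvexE {B : Type*} [AddCommGroup B] [Module ℝ B] (f : B → EReal) : Prop :=
  ∀ x y : B, ∀ a b : ℝ, 0 ≤ a → 0 ≤ b → a + b = 1 →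
    f (a • x + b • y) ≤ (a : EReal) * f x + (b : EReal) * f y

/-- The enlargement `A_h` associated to a representative function `h`. -/
def Ah {B : Type*} [AddCommGroup B] (q : B → ℝ) (h : B → EReal) (ε : ℝ) : Set B :=
  {b : B | h b ≤ (ε : EReal) + (q b : EReal)}

section Aux

variable {B : Type*} [NormedAddCommGroup B] [NormedSpace ℝ B]

lemma q_mix_aux (brk : B →ₗ[ℝ] B →ₗ[ℝ] ℝ) (hsym : ∀ b c : B, brk b c = brk c b)
    (q : B → ℝ) (hq : ∀ b : B, q b = brk b b / 2)
    (α₁ α₂ : ℝ) (hα : α₁ + α₂ = 1) (b₁ b₂ : B) :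
    q (α₁ • b₁ + α₂ • b₂) = α₁ * q b₁ + α₂ * q b₂ - α₁ * α₂ * q (b₁ - b₂) := by
  have hα2 : α₂ = 1 - α₁ := by linarith
  subst hα2
  have hs := hsym b₁ b₂
  simp only [hq, map_add, map_sub, map_smul, LinearMap.add_apply, LinearMap.sub_apply,
    LinearMap.smul_apply, smul_eq_mul]
  nlinarith [hs]

lemma closed_le_aux {X : Type*} [TopologicalSpace X] (h : X → EReal) (g : X → ℝ)
    (hlsc : LowerSemicontinuous h) (hg : Continuous g) :
    IsClosed {x : X | h x ≤ (g x : EReal)} := by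
  rw [← isOpen_compl_iff, isOpen_iff_mem_nhds]
  intro x hx
  simp only [Set.mem_compl_iff, Set.mem_setOf_eq, not_le] at hx
  obtain ⟨y, hy1, hy2⟩ := exists_between hx
  have h1 : ∀ᶠ x' in nhds x, y < h x' := hlsc x y hy2
  have h2 : ∀ᶠ x' in nhds x, (g x' : EReal) < y := by
    induction y using EReal.rec with
    | bot => exact absurd hy1 (by simp)
    | top => exact Filter.Eventually.of_forall fun x' => EReal.coe_lt_top _
    | coe y =>
      have hyr : ∀ᶠ x' in nhds x, g x' < y :=
        (hg.continuousAt (x := x)).eventually_lt continuousAt_const (by exact_mod_cast hy1)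
      exact hyr.mono fun x' hx' => by exact_mod_cast hx'
  filter_upwards [h1, h2] with x' h1' h2'
  simp only [Set.mem_compl_iff, Set.mem_setOf_eq, not_le]
  exact h2'.trans h1'

end Aux

theorem Ah_mem_closed_family_and_Lambda_eq
    (B : Type*) [NormedAddCommGroup B] [NormedSpace ℝ B] [CompleteSpace B] [Nontrivial B]
    (brk : B →ₗ[ℝ] B →ₗ[ℝ] ℝ) (hsym : ∀ b c : B, brk b c = brk c b)
    (q : B → ℝ) (hq : ∀ b : B, q b = brk b b / 2)
    (hpos : ∀ b : B, 0 ≤ (1 / 2) * ‖b‖ ^ 2 + q b)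
    (ι : B →L[ℝ] (B →L[ℝ] ℝ)) (hι : ∀ b c : B, ι c b = brk b c)
    (A : Set B) (hA : MaxQPositive q A)
    (h : B → EReal) (hconv : ConvexE h) (hlsc : LowerSemicontinuous h)
    (hge : ∀ b : B, (q b : EReal) ≤ h b) (heq : ∀ b ∈ A, h b = (q b : EReal)) :
    MemEnlFamilyClosed q A (Ah q h) ∧
      ∀ b : B, lamE (Ah q h) b + (q b : EReal) = h b := by
  
  have qc : Continuous q := by
    have h1 : Continuous fun b : B => (ι b) b := ι.continuous.clm_apply continuous_id
    have h2 : q = fun b => (ι b) b / 2 := by funext b; rw [hι, hq]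
    rw [h2]; exact h1.div_const 2
  constructor
  · refine ⟨?_, ?_, ?_, ?_⟩
    · intro ε hε b hb
      simp only [Ah, Set.mem_setOf_eq, heq b hb]
      exact le_add_of_nonneg_left (by exact_mod_cast hε)
    · intro ε₁ ε₂ h1 h12 b hb
      simp only [Ah, Set.mem_setOf_eq] at hb ⊢
      exact hb.trans (add_le_add (by exact_mod_cast h12) le_rfl)
    · intro ε₁ ε₂ hε₁ hε₂ b₁ hb₁ b₂ hb₂ α₁ α₂ hα₁ hα₂ hα
      simp only [Ah, Set.mem_setOf_eq] at hb₁ hb₂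
      have hb₁' : h b₁ ≤ ((ε₁ + q b₁ : ℝ) : EReal) := by rw [EReal.coe_add]; exact hb₁
      have hb₂' : h b₂ ≤ ((ε₂ + q b₂ : ℝ) : EReal) := by rw [EReal.coe_add]; exact hb₂
      have hnt₁ : h b₁ ≠ ⊤ := ne_top_of_le_ne_top (EReal.coe_ne_top _) hb₁'
      have hnt₂ : h b₂ ≠ ⊤ := ne_top_of_le_ne_top (EReal.coe_ne_top _) hb₂'
      have hnb₁ : h b₁ ≠ ⊥ := fun e => (EReal.coe_ne_bot (q b₁)) (le_bot_iff.mp (e ▸ hge b₁))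
      have hnb₂ : h b₂ ≠ ⊥ := fun e => (EReal.coe_ne_bot (q b₂)) (le_bot_iff.mp (e ▸ hge b₂))
      set x₁ := (h b₁).toReal with hx₁def
      set x₂ := (h b₂).toReal with hx₂def
      have hx₁ : h b₁ = (x₁ : EReal) := (EReal.coe_toReal hnt₁ hnb₁).symm
      have hx₂ : h b₂ = (x₂ : EReal) := (EReal.coe_toReal hnt₂ hnb₂).symm
      have hx₁le : x₁ ≤ ε₁ + q b₁ := by rw [hx₁] at hb₁'; exact_mod_cast hb₁'
      have hx₂le : x₂ ≤ ε₂ + q b₂ := by rw [hx₂] at hb₂'; exact_mod_cast hb₂'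
      set m := α₁ • b₁ + α₂ • b₂ with hm
      set δ := α₁ * ε₁ + α₂ * ε₂ + α₁ * α₂ * q (b₁ - b₂) with hδdef
      have hqm := q_mix_aux brk hsym q hq α₁ α₂ hα b₁ b₂
      have key : h m ≤ ((δ + q m : ℝ) : EReal) := by
        have hc := hconv b₁ b₂ α₁ α₂ hα₁ hα₂ hα
        rw [hx₁, hx₂] at hc
        have hcast : (α₁ : EReal) * (x₁ : EReal) + (α₂ : EReal) * (x₂ : EReal)
            = ((α₁ * x₁ + α₂ * x₂ : ℝ) : EReal) := by norm_cast
        rw [hcast] at hc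
        refine hc.trans ?_
        apply EReal.coe_le_coe_iff.mpr
        rw [← hm] at hqm
        nlinarith [mul_le_mul_of_nonneg_left hx₁le hα₁, mul_le_mul_of_nonneg_left hx₂le hα₂]
      have hδ0 : 0 ≤ δ := by
        have h2 := (hge m).trans key
        rw [EReal.coe_le_coe_iff] at h2
        linarith
      refine ⟨hδ0, ?_⟩
      simp only [Ah, Set.mem_setOf_eq]
      rw [← EReal.coe_add]
      exact key
    · have hset : {p : ℝ × B | 0 ≤ p.1 ∧ p.2 ∈ Ah q h p.1}
          = {p : ℝ × B | 0 ≤ p.1} ∩ {p : ℝ × B | h p.2 ≤ ((p.1 + q p.2 : ℝ) : EReal)} := by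
        ext p; simp [Ah, EReal.coe_add]
      rw [hset]
      exact (isClosed_le continuous_const continuous_fst).inter
        (closed_le_aux _ _ (hlsc.comp continuous_snd)
          (continuous_fst.add (qc.comp continuous_snd)))
  · intro b
    by_cases hbt : h b = ⊤
    · have hempty : {ε : ℝ | 0 ≤ ε ∧ b ∈ Ah q h ε} = ∅ := by
        ext ε
        simp only [Ah, Set.mem_setOf_eq, hbt, Set.mem_empty_iff_false, iff_false, not_and]
        intro _
        rw [← EReal.coe_add]
        exact fun hle => (EReal.coe_ne_top _) (top_le_iff.mp hle)
      simp [lamE, hempty, hbt]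
    · have hnb : h b ≠ ⊥ := fun e => (EReal.coe_ne_bot (q b)) (le_bot_iff.mp (e ▸ hge b))
      set x := (h b).toReal with hxdef
      have hx : h b = (x : EReal) := (EReal.coe_toReal hbt hnb).symm
      have hqx : q b ≤ x := by
        have := hge b; rw [hx] at this; exact_mod_cast this
      have hset : {ε : ℝ | 0 ≤ ε ∧ b ∈ Ah q h ε} = {ε : ℝ | x - q b ≤ ε} := by
        ext ε
        simp only [Ah, Set.mem_setOf_eq, hx]
        rw [← EReal.coe_add, EReal.coe_le_coe_iff]
        constructor
        · rintro ⟨h1, h2⟩; linarith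
        · intro h1; exact ⟨by linarith, by linarith⟩
      have hinf : lamE (Ah q h) b = ((x - q b : ℝ) : EReal) := by
        rw [lamE, hset]
        apply le_antisymm
        · exact sInf_le ⟨x - q b, by simp, rfl⟩
        · apply le_sInf
          rintro _ ⟨ε, hε, rfl⟩
          simp only [Set.mem_setOf_eq] at hε
          simp only []
          exact EReal.coe_le_coe_iff.mpr hε
      rw [hinf, hx, ← EReal.coe_add]
      norm_num
end

section
/- Let B be a Banach SSD space, A ⊆ B maximally q-positive and h ∈ 𝓗(A). Then A = {b ∈ B : h(b) = q(b)}. -/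
theorem representative_determines_A
    (B : Type*) [NormedAddCommGroup B] [NormedSpace ℝ B] [CompleteSpace B] [Nontrivial B]
    (brk : B →ₗ[ℝ] B →ₗ[ℝ] ℝ) (hsym : ∀ b c : B, brk b c = brk c b)
    (q : B → ℝ) (hq : ∀ b : B, q b = brk b b / 2)
    (hpos : ∀ b : B, 0 ≤ (1 / 2) * ‖b‖ ^ 2 + q b)
    (ι : B →L[ℝ] (B →L[ℝ] ℝ)) (hι : ∀ b c : B, ι c b = brk b c)
    (A : Set B) (hA : MaxQPositive q A)
    (h : B → EReal) (hconv : ConvexE h) (hlsc : LowerSemicontinuous h)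
    (hge : ∀ b : B, (q b : EReal) ≤ h b) (heq : ∀ b ∈ A, h b = (q b : EReal)) :
    A = {b : B | h b = (q b : EReal)} := by
  obtain ⟨⟨hne, hAq⟩, hmax⟩ := hA
  have hqsub : ∀ x y : B, q (x - y) = q x + q y - brk x y := by
    intro x y
    simp only [hq, map_sub, LinearMap.sub_apply]
    rw [hsym y x]; ring
  apply Set.Subset.antisymm
  · intro b hb
    exact heq b hb
  · intro b hb
    simp only [Set.mem_setOf_eq] at hb
    have key : ∀ c ∈ A, 0 ≤ q (b - c) := by
      intro c hc
      have hmid : (q (((1:ℝ)/2) • b + ((1:ℝ)/2) • c) : EReal)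
          ≤ (((1:ℝ)/2) * q b + ((1:ℝ)/2) * q c : ℝ) := by
        calc (q (((1:ℝ)/2) • b + ((1:ℝ)/2) • c) : EReal) ≤ h _ := hge _
          _ ≤ (((1:ℝ)/2 : ℝ) : EReal) * h b + (((1:ℝ)/2 : ℝ) : EReal) * h c :=
              hconv b c (1/2) (1/2) (by norm_num) (by norm_num) (by norm_num)
          _ = (((1:ℝ)/2) * q b + ((1:ℝ)/2) * q c : ℝ) := by
              rw [hb, heq c hc]; norm_cast
      have hmidR : q (((1:ℝ)/2) • b + ((1:ℝ)/2) • c) ≤ ((1:ℝ)/2) * q b + ((1:ℝ)/2) * q c :=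
        EReal.coe_le_coe_iff.mp hmid
      have hexp : q (((1:ℝ)/2) • b + ((1:ℝ)/2) • c)
          = (q b + q c + brk b c) / 4 := by
        simp only [hq, map_add, map_smul, LinearMap.add_apply, LinearMap.smul_apply,
          smul_eq_mul]
        rw [hsym c b]; ring
      rw [hqsub]
      rw [hexp] at hmidR
      linarith
    have hqneg : ∀ x : B, q (-x) = q x := by
      intro x; simp [hq]
    have hA' : QPositive q (insert b A) := by
      refine ⟨⟨b, Set.mem_insert _ _⟩, ?_⟩
      rintro x (rfl | hx) y (rfl | hy)
      · simp [hq]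
      · exact key y hy
      · rw [show x - y = -(y - x) by abel, hqneg]; exact key x hx
      · exact hAq x hx y hy
    have := hmax _ hA' (Set.subset_insert _ _)
    rw [← this]
    exact Set.mem_insert _ _
end

section
/- Let B be a Banach SSD space, A ⊆ B maximally q-positive, E ∈ 𝓔_c(A), ε₁, ε₂ ≥ 0, b¹ ∈ E(ε₁), b² ∈ E(ε₂). Then q(b¹ − b²) ≥ −(√ε₁ + √ε₂)². -/
theorem closed_enlargement_lower_bound
    (B : Type*) [NormedAddCommGroup B] [NormedSpace ℝ B] [CompleteSpace B] [Nontrivial B]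
    (brk : B →ₗ[ℝ] B →ₗ[ℝ] ℝ) (hsym : ∀ b c : B, brk b c = brk c b)
    (q : B → ℝ) (hq : ∀ b : B, q b = brk b b / 2)
    (hpos : ∀ b : B, 0 ≤ (1 / 2) * ‖b‖ ^ 2 + q b)
    (ι : B →L[ℝ] (B →L[ℝ] ℝ)) (hι : ∀ b c : B, ι c b = brk b c)
    (A : Set B) (hA : MaxQPositive q A)
    (E : ℝ → Set B) (hE : MemEnlFamilyClosed q A E)
    (ε₁ ε₂ : ℝ) (hε₁ : 0 ≤ ε₁) (hε₂ : 0 ≤ ε₂)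
    (b₁ b₂ : B) (hb₁ : b₁ ∈ E ε₁) (hb₂ : b₂ ∈ E ε₂) :
    -(Real.sqrt ε₁ + Real.sqrt ε₂) ^ 2 ≤ q (b₁ - b₂) := by
  set Q := q (b₁ - b₂) with hQ
  have key : ∀ t : ℝ, 0 ≤ t → t ≤ 1 →
      0 ≤ t * ε₁ + (1 - t) * ε₂ + t * (1 - t) * Q := by
    intro t ht ht1
    have := (hE.2.2.1 ε₁ ε₂ hε₁ hε₂ b₁ hb₁ b₂ hb₂ t (1 - t) ht (by linarith) (by ring)).1
    linarith
  have h1 := Real.sq_sqrt hε₁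
  have h2 := Real.sq_sqrt hε₂
  have hs1 := Real.sqrt_nonneg ε₁
  have hs2 := Real.sqrt_nonneg ε₂
  rcases eq_or_lt_of_le hε₁ with he1 | he1
  · rcases eq_or_lt_of_le hε₂ with he2 | he2
    · -- both zero
      have := key (1/2) (by norm_num) (by norm_num)
      rw [← he1, ← he2] at this ⊢
      simp only [Real.sqrt_zero] at *
      nlinarith
    · -- ε₁ = 0, ε₂ > 0 : need -ε₂ ≤ Q
      have hgoal : -ε₂ ≤ Q := by
        by_contra h
        push_neg at h
        have hQneg : Q < 0 := by linarith
        set t : ℝ := (ε₂ - Q) / (2 * (-Q)) with htdef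
        have ht0 : 0 < t := by
          apply div_pos <;> linarith
        have ht1 : t < 1 := by
          rw [htdef, div_lt_one (by linarith)]
          linarith
        have hk := key t ht0.le ht1.le
        rw [← he1] at hk
        have hQne : Q ≠ 0 := hQneg.ne
        have htQ : t * Q = -((ε₂ - Q) / 2) := by
          rw [htdef]
          field_simp
        nlinarith
      calc -(Real.sqrt ε₁ + Real.sqrt ε₂)^2 = -ε₂ := by
            rw [← he1, Real.sqrt_zero]; nlinarith
        _ ≤ Q := hgoal
  · rcases eq_or_lt_of_le hε₂ with he2 | he2
    · -- ε₂ = 0, ε₁ > 0 : need -ε₁ ≤ Q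
      have hgoal : -ε₁ ≤ Q := by
        by_contra h
        push_neg at h
        have hQneg : Q < 0 := by linarith
        set t : ℝ := (ε₁ - Q) / (2 * (-Q)) with htdef
        have ht0 : 0 < t := by
          apply div_pos <;> linarith
        have ht1 : t < 1 := by
          rw [htdef, div_lt_one (by linarith)]
          linarith
        have hk := key (1 - t) (by linarith) (by linarith)
        rw [← he2] at hk
        have hQne : Q ≠ 0 := hQneg.ne
        have htQ : t * Q = -((ε₁ - Q) / 2) := by
          rw [htdef]
          field_simp
        nlinarith
      calc -(Real.sqrt ε₁ + Real.sqrt ε₂)^2 = -ε₁ := by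
            rw [← he2, Real.sqrt_zero]; nlinarith
        _ ≤ Q := hgoal
    · -- both positive
      have hr1 : 0 < Real.sqrt ε₁ := Real.sqrt_pos.mpr he1
      have hr2 : 0 < Real.sqrt ε₂ := Real.sqrt_pos.mpr he2
      have hspos : 0 < Real.sqrt ε₁ + Real.sqrt ε₂ := by linarith
      set r1 := Real.sqrt ε₁
      set r2 := Real.sqrt ε₂
      set s := r1 + r2 with hsdef
      have ht0 : 0 ≤ r2 / s := by positivity
      have ht1 : r2 / s ≤ 1 := by
        rw [div_le_one hspos]; linarith
      have hk := key (r2 / s) ht0 ht1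
      have h1t : 1 - r2 / s = r1 / s := by
        field_simp
        rw [hsdef]; ring
      rw [h1t] at hk
      have hk' : 0 ≤ (r2 / s) * ε₁ + (r1 / s) * ε₂ + (r2 / s) * (r1 / s) * Q := hk
      have hmul : 0 ≤ ((r2 / s) * ε₁ + (r1 / s) * ε₂ + (r2 / s) * (r1 / s) * Q) * s ^ 2 :=
        mul_nonneg hk' (by positivity)
      have hexp : ((r2 / s) * ε₁ + (r1 / s) * ε₂ + (r2 / s) * (r1 / s) * Q) * s ^ 2
          = r2 * s * ε₁ + r1 * s * ε₂ + r1 * r2 * Q := by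
        field_simp
      rw [hexp] at hmul
      rw [← h1, ← h2, hsdef] at hmul
      have h3 : 0 ≤ (r1 + r2) ^ 2 + Q := by
        by_contra hc
        push_neg at hc
        nlinarith [mul_pos hr1 hr2]
      rw [hsdef]
      linarith
end

section
/- Let B be a Banach SSD space, A ⊆ B maximally q-positive, and E ∈ 𝓔_c(A). Then E is additive (i.e. q(b¹−b²) ≥ −(ε₁+ε₂) whenever b¹ ∈ E(ε₁), b² ∈ E(ε₂), ε₁,ε₂ ≥ 0) if and only if Λ_E^@ ≤ Λ_E on B, where Λ_E^@(c) = sup_{b∈B}{⌊b,c⌋ − Λ_E(b)}. -/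
theorem additive_iff_conjugate_le
    (B : Type*) [NormedAddCommGroup B] [NormedSpace ℝ B] [CompleteSpace B] [Nontrivial B]
    (brk : B →ₗ[ℝ] B →ₗ[ℝ] ℝ) (hsym : ∀ b c : B, brk b c = brk c b)
    (q : B → ℝ) (hq : ∀ b : B, q b = brk b b / 2)
    (hpos : ∀ b : B, 0 ≤ (1 / 2) * ‖b‖ ^ 2 + q b)
    (ι : B →L[ℝ] (B →L[ℝ] ℝ)) (hι : ∀ b c : B, ι c b = brk b c)
    (A : Set B) (hA : MaxQPositive q A)
    (E : ℝ → Set B) (hE : MemEnlFamilyClosed q A E) :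
    (∀ ε₁ ε₂ : ℝ, 0 ≤ ε₁ → 0 ≤ ε₂ → ∀ b₁ ∈ E ε₁, ∀ b₂ ∈ E ε₂,
        -(ε₁ + ε₂) ≤ q (b₁ - b₂)) ↔
      ∀ c : B, (⨆ b : B, ((brk b c : ℝ) : EReal) - (lamE E b + (q b : EReal))) ≤
        lamE E c + (q c : EReal) := by
  obtain ⟨-, -, -, hclosed⟩ := hE
  -- q(b - c) = q b + q c - ⌊b, c⌋
  have hqsub : ∀ b c : B, q (b - c) = q b + q c - brk b c := by
    intro b c
    have h1 : brk (b - c) (b - c)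
        = brk b b - brk c b - (brk b c - brk c c) := by
      simp [map_sub]
    rw [hq, hq, hq, h1, hsym c b]; ring
  -- the infimum defining lamE is attained (by closedness of the graph)
  have key : ∀ b : B, {ε : ℝ | 0 ≤ ε ∧ b ∈ E ε}.Nonempty →
      ∃ ε : ℝ, 0 ≤ ε ∧ b ∈ E ε ∧ lamE E b = (ε : EReal) ∧
        ∀ ε' : ℝ, 0 ≤ ε' → b ∈ E ε' → ε ≤ ε' := by
    intro b hne
    set S := {ε : ℝ | 0 ≤ ε ∧ b ∈ E ε} with hS
    have hSb : BddBelow S := ⟨0, fun x hx => hx.1⟩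
    have hScl : IsClosed S := by
      have : S = (fun ε : ℝ => (ε, b)) ⁻¹' {p : ℝ × B | 0 ≤ p.1 ∧ p.2 ∈ E p.1} := rfl
      rw [this]
      exact hclosed.preimage (continuous_id.prodMk continuous_const)
    have hmem : sInf S ∈ S := hScl.csInf_mem hne hSb
    refine ⟨sInf S, hmem.1, hmem.2, ?_, fun ε' h1 h2 => csInf_le hSb ⟨h1, h2⟩⟩
    apply le_antisymm
    · exact sInf_le ⟨sInf S, hmem, rfl⟩
    · apply le_sInf
      rintro x ⟨ε, hε, rfl⟩
      show ((sInf S : ℝ) : EReal) ≤ (ε : EReal)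
      exact_mod_cast csInf_le hSb hε
  constructor
  · intro hadd c
    apply iSup_le
    intro b
    by_cases hb : {ε : ℝ | 0 ≤ ε ∧ b ∈ E ε}.Nonempty
    · by_cases hc : {ε : ℝ | 0 ≤ ε ∧ c ∈ E ε}.Nonempty
      · obtain ⟨εb, hεb0, hεbE, hεblam, -⟩ := key b hb
        obtain ⟨εc, hεc0, hεcE, hεclam, -⟩ := key c hc
        rw [hεblam, hεclam]
        have hq' := hadd εb εc hεb0 hεc0 b hεbE c hεcE
        rw [hqsub] at hq'
        have hr : brk b c - (εb + q b) ≤ εc + q c := by linarith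
        calc ((brk b c : ℝ) : EReal) - ((εb : EReal) + (q b : EReal))
            = ((brk b c - (εb + q b) : ℝ) : EReal) := by
              rw [← EReal.coe_add, ← EReal.coe_sub]
          _ ≤ ((εc + q c : ℝ) : EReal) := by exact_mod_cast hr
          _ = (εc : EReal) + (q c : EReal) := by rw [EReal.coe_add]
      · have : lamE E c = ⊤ := by
          unfold lamE
          rw [Set.not_nonempty_iff_eq_empty.mp hc]
          simp
        rw [this]
        simp
    · have : lamE E b = ⊤ := by
        unfold lamE
        rw [Set.not_nonempty_iff_eq_empty.mp hb]
        simp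
      rw [this]
      have : ((brk b c : ℝ) : EReal) - ((⊤ : EReal) + (q b : EReal)) = ⊥ := by
        rw [EReal.top_add_coe]
        rfl
      rw [this]
      exact bot_le
  · intro h ε₁ ε₂ hε₁ hε₂ b₁ hb₁ b₂ hb₂
    obtain ⟨εb, hεb0, hεbE, hεblam, hεbmin⟩ := key b₁ ⟨ε₁, hε₁, hb₁⟩
    obtain ⟨εc, hεc0, hεcE, hεclam, hεcmin⟩ := key b₂ ⟨ε₂, hε₂, hb₂⟩
    have hsup := le_trans
      (le_iSup (fun b => ((brk b b₂ : ℝ) : EReal) - (lamE E b + (q b : EReal))) b₁)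
      (h b₂)
    rw [hεblam, hεclam] at hsup
    have hreal : brk b₁ b₂ - (εb + q b₁) ≤ εc + q b₂ := by
      rw [← EReal.coe_add, ← EReal.coe_sub, ← EReal.coe_add] at hsup
      exact_mod_cast hsup
    rw [hqsub]
    have h1 := hεbmin ε₁ hε₁ hb₁
    have h2 := hεcmin ε₂ hε₂ hb₂
    linarith
end
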